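/- For every 1 ≤ r ≤ m and all indices 1 ≤ c₁ < ⋯ < c_r ≤ m and 1 ≤ d₁ < ⋯ < d_r ≤ n satisfying d_j ≥ b_j for all j = 1, …, r (i.e. [c₁,…,c_r | d₁,…,d_r] ∈ Δ(m×n;γ*)), the leading monomial of the minor [c₁,…,c_r | d₁,…,d_r]_{Z_γ} of Z_γ = W·U_γ is lm([c₁,…,c_r | d₁,…,d_r]_{Z_γ}) = ∏_{j=1}^{r} W_{c_j, j} · U_{j, d_j}. -/

import Mathlib

open MvPolynomial Matrix

/-- The variables `W_{ij}`, `U_{ij}` (a type synonym carrying the variable order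
`W₁₁ > W₂₁ > ⋯ > W_{mm} > U_{1,1} > ⋯ > U_{m,n}`, most significant variable smallest). -/
def MyVar (m n : ℕ) : Type := (Fin m × Fin m) ⊕ (Fin m × Fin n)

/-- The variable `W_{ij}`. -/
def wvar {m n : ℕ} (i j : Fin m) : MyVar m n := Sum.inl (i, j)

/-- The variable `U_{ij}`. -/
def uvar {m n : ℕ} (i : Fin m) (j : Fin n) : MyVar m n := Sum.inr (i, j)

/-- Rank of a variable in the significance list
`W₁₁ > W₂₁ > ⋯ > W_{m1} > W₁₂ > ⋯ > W_{mm} > U_{1,1} > U_{1,2} > ⋯ > U_{1,n} > U_{2,1} > ⋯`. -/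
def varRank (m n : ℕ) : MyVar m n → ℕ := fun v =>
  match v with
  | Sum.inl (i, j) => (i : ℕ) + (j : ℕ) * m
  | Sum.inr (i, j) => m * m + ((j : ℕ) + (i : ℕ) * n)

theorem varRank_injective (m n : ℕ) : Function.Injective (varRank m n) := by
  have key : ∀ (k : ℕ) (i i' : Fin k) (a a' : ℕ), (i : ℕ) + a * k = (i' : ℕ) + a' * k →
      (i : ℕ) = i' ∧ a = a' := by
    intro k i i' a a' h
    have hk : 0 < k := i.pos
    have h1 : (i : ℕ) = (i' : ℕ) := by
      have := congrArg (· % k) h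
      simpa [Nat.add_mul_mod_self_right, Nat.mod_eq_of_lt i.isLt,
        Nat.mod_eq_of_lt i'.isLt] using this
    refine ⟨h1, ?_⟩
    rw [h1] at h
    exact Nat.eq_of_mul_eq_mul_right hk (Nat.add_left_cancel h)
  have hlt : ∀ (i j : Fin m), (i : ℕ) + (j : ℕ) * m < m * m := by
    intro i j
    calc (i : ℕ) + (j : ℕ) * m < m + (j : ℕ) * m := by
          exact Nat.add_lt_add_right i.isLt _
    _ = ((j : ℕ) + 1) * m := by ring
    _ ≤ m * m := Nat.mul_le_mul_right m j.isLt
  rintro (⟨i, j⟩ | ⟨i, j⟩) (⟨i', j'⟩ | ⟨i', j'⟩) h <;> simp only [varRank] at h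
  · obtain ⟨h1, h2⟩ := key m i i' j j' h
    have hi : i = i' := Fin.ext h1
    have hj : j = j' := Fin.ext h2
    rw [hi, hj]
  · exact absurd h (by have := hlt i j; omega)
  · exact absurd h.symm (by have := hlt i' j'; omega)
  · have h' : (j : ℕ) + (i : ℕ) * n = (j' : ℕ) + (i' : ℕ) * n := Nat.add_left_cancel h
    obtain ⟨h1, h2⟩ := key n j j' i i' h'
    have hi : i = i' := Fin.ext h2
    have hj : j = j' := Fin.ext h1
    rw [hi, hj]

/-- The variable order (most significant variable least). -/
instance (m n : ℕ) : LinearOrder (MyVar m n) :=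
  LinearOrder.lift' (varRank m n) (varRank_injective m n)

/-- The degree lexicographic order on monomials: first compare total degrees, then
compare lexicographically (a monomial is larger if it has larger exponent at the most
significant, i.e. least, variable where they differ). -/
def degLexLt {σ : Type*} [LinearOrder σ] (a b : σ →₀ ℕ) : Prop :=
  (a.sum fun _ e => e) < (b.sum fun _ e => e) ∨
    ((a.sum fun _ e => e) = (b.sum fun _ e => e) ∧ toLex a < toLex b)

/-- `d` is the leading monomial (exponent vector) of `f` for the degree lexicographic
order: it occurs in `f` and strictly dominates every other monomial of `f`. -/
def IsLeadingMonomial {σ : Type*} [LinearOrder σ] {K : Type*} [CommSemiring K]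
    (f : MvPolynomial σ K) (d : σ →₀ ℕ) : Prop :=
  d ∈ f.support ∧ ∀ d' ∈ f.support, d' ≠ d → degLexLt d' d

/-- The `m × m` matrix `W` of indeterminates. -/
noncomputable def Wmat (K : Type) [Field K] (m n : ℕ) :
    Matrix (Fin m) (Fin m) (MvPolynomial (MyVar m n) K) :=
  fun i j => X (wvar i j)

/-- The `m × n` matrix `U_γ` whose `(i,j)` entry is the indeterminate `U_{ij}` when
`j ≥ b i` and `0` otherwise. -/
noncomputable def Umat (K : Type) [Field K] (m n : ℕ) (b : Fin m → Fin n) :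
    Matrix (Fin m) (Fin n) (MvPolynomial (MyVar m n) K) :=
  fun i j => if b i ≤ j then X (uvar i j) else 0

/-- `Z_γ := W · U_γ`. -/
noncomputable def Zmat (K : Type) [Field K] (m n : ℕ) (b : Fin m → Fin n) :
    Matrix (Fin m) (Fin n) (MvPolynomial (MyVar m n) K) :=
  Wmat K m n * Umat K m n b
section DetLM

open Finset MvPolynomial Equiv

instance myVarDecEq (m n : ℕ) : DecidableEq (MyVar m n) :=
  inferInstanceAs (DecidableEq ((Fin m × Fin m) ⊕ (Fin m × Fin n)))

lemma myvar_lt_iff {m n : ℕ} {v w : MyVar m n} :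
    v < w ↔ varRank m n v < varRank m n w := Iff.rfl

lemma wvar_eq_iff {m n : ℕ} {i i' a a' : Fin m} :
    (wvar (n := n) i a = wvar i' a') ↔ (i = i' ∧ a = a') := by
  unfold wvar
  constructor
  · intro h
    have := varRank_injective m n
    exact by
      have h' : (Sum.inl (i, a) : (Fin m × Fin m) ⊕ (Fin m × Fin n)) = Sum.inl (i', a') := h
      simpa using h'
  · rintro ⟨rfl, rfl⟩; rfl

lemma uvar_eq_iff {m n : ℕ} {i i' : Fin m} {e e' : Fin n} :
    (uvar i e = uvar i' e') ↔ (i = i' ∧ e = e') := by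
  unfold uvar
  constructor
  · intro h
    have h' : (Sum.inr (i, e) : (Fin m × Fin m) ⊕ (Fin m × Fin n)) = Sum.inr (i', e') := h
    simpa using h'
  · rintro ⟨rfl, rfl⟩; rfl

lemma uvar_ne_wvar {m n : ℕ} {i a : Fin m} {i' : Fin m} {e : Fin n} :
    (uvar i' e : MyVar m n) ≠ wvar i a := by
  intro h
  have h' : (Sum.inr (i', e) : (Fin m × Fin m) ⊕ (Fin m × Fin n)) = Sum.inl (i, a) := h
  simp at h'

variable {K : Type} [Field K] {m n r : ℕ}

/-- The exponent vector of the monomial coming from permutation `σ` and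
column choice `k` in the expansion of the minor. -/
noncomputable def mexp (c : Fin r → Fin m) (d : Fin r → Fin n)
    (σ : Equiv.Perm (Fin r)) (k : Fin r → Fin m) : MyVar m n →₀ ℕ :=
  ∑ j : Fin r,
    (Finsupp.single (wvar (c (σ j)) (k j)) 1 + Finsupp.single (uvar (k j) (d j)) 1)

lemma mexp_apply (c : Fin r → Fin m) (d : Fin r → Fin n) (σ : Equiv.Perm (Fin r))
    (k : Fin r → Fin m) (v : MyVar m n) :
    mexp c d σ k v = ∑ j : Fin r,
      ((if wvar (c (σ j)) (k j) = v then 1 else 0) +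
       (if uvar (k j) (d j) = v then 1 else 0)) := by
  classical
  rw [mexp, Finsupp.finset_sum_apply]
  refine Finset.sum_congr rfl fun j _ => ?_
  rw [Finsupp.add_apply, Finsupp.single_apply, Finsupp.single_apply]

lemma mexp_apply_wvar (c : Fin r → Fin m) (d : Fin r → Fin n) (σ : Equiv.Perm (Fin r))
    (k : Fin r → Fin m) (i a : Fin m) :
    mexp c d σ k (wvar i a) = ∑ j : Fin r,
      (if c (σ j) = i ∧ k j = a then 1 else 0) := by
  rw [mexp_apply]
  refine Finset.sum_congr rfl fun j _ => ?_
  rw [if_neg uvar_ne_wvar, add_zero]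
  exact if_congr wvar_eq_iff rfl rfl

lemma mexp_apply_uvar (c : Fin r → Fin m) (d : Fin r → Fin n) (σ : Equiv.Perm (Fin r))
    (k : Fin r → Fin m) (i : Fin m) (e : Fin n) :
    mexp c d σ k (uvar i e) = ∑ j : Fin r,
      (if k j = i ∧ d j = e then 1 else 0) := by
  rw [mexp_apply]
  refine Finset.sum_congr rfl fun j _ => ?_
  rw [if_neg (Ne.symm uvar_ne_wvar), zero_add]
  exact if_congr uvar_eq_iff rfl rfl

lemma sum_ite_point (P : Fin r → Prop) [DecidablePred P] (j0 : Fin r) (Q : Prop)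
    [Decidable Q] (h : ∀ j, P j ↔ (j = j0 ∧ Q)) :
    (∑ j : Fin r, if P j then (1 : ℕ) else 0) = if Q then 1 else 0 := by
  by_cases hq : Q
  · rw [if_pos hq]
    have h' : ∀ j, P j ↔ j = j0 := fun j => by rw [h j]; simp [hq]
    rw [Finset.sum_congr rfl fun j _ => if_congr (h' j) rfl rfl]
    simp
  · rw [if_neg hq, Finset.sum_eq_zero]
    intro j _
    exact if_neg (fun hj => hq ((h j).mp hj).2)

lemma sum_ite_zero' (P : Fin r → Prop) [DecidablePred P] (h : ∀ j, ¬ P j) :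
    (∑ j : Fin r, if P j then (1 : ℕ) else 0) = 0 :=
  Finset.sum_eq_zero fun j _ => if_neg (h j)

lemma mexp_k_eq {c : Fin r → Fin m} {d : Fin r → Fin n} (hd : Function.Injective d)
    {σ σ' : Equiv.Perm (Fin r)} {k k' : Fin r → Fin m}
    (h : mexp c d σ k = mexp c d σ' k') : k = k' := by
  classical
  funext j
  have h1 : mexp c d σ k (uvar (k j) (d j)) = 1 := by
    rw [mexp_apply_uvar, sum_ite_point _ j True ?_]
    · simp
    · intro j'
      constructor
      · rintro ⟨h1, h2⟩; exact ⟨hd h2, trivial⟩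
      · rintro ⟨rfl, -⟩; exact ⟨rfl, rfl⟩
  have h2 : mexp c d σ' k' (uvar (k j) (d j)) = if k' j = k j then 1 else 0 := by
    rw [mexp_apply_uvar, sum_ite_point _ j (k' j = k j) ?_]
    intro j'
    constructor
    · rintro ⟨h1, h2⟩
      obtain rfl := hd h2
      exact ⟨rfl, h1⟩
    · rintro ⟨rfl, hq⟩; exact ⟨hq, rfl⟩
  rw [h, h2] at h1
  by_contra hne
  rw [if_neg (fun hh => hne hh.symm)] at h1
  exact absurd h1 (by norm_num)

lemma mexp_eq_target (hrm : r ≤ m) {c : Fin r → Fin m} {d : Fin r → Fin n}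
    (hc : Function.Injective c) (hd : Function.Injective d)
    {σ : Equiv.Perm (Fin r)} {k : Fin r → Fin m}
    (h : mexp c d σ k = mexp c d 1 (fun j => Fin.castLE hrm j)) :
    σ = 1 ∧ k = (fun j => Fin.castLE hrm j) := by
  classical
  have hk := mexp_k_eq hd h
  subst hk
  refine ⟨Equiv.ext fun j => ?_, rfl⟩
  show σ j = j
  have hv1 : mexp c d σ (fun j => Fin.castLE hrm j) (wvar (c (σ j)) (Fin.castLE hrm j)) = 1 := by
    rw [mexp_apply_wvar, sum_ite_point _ j True ?_]
    · simp
    · intro j'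
      constructor
      · rintro ⟨h1, h2⟩
        exact ⟨Fin.castLE_injective hrm h2, trivial⟩
      · rintro ⟨rfl, -⟩; exact ⟨rfl, rfl⟩
  rw [h, mexp_apply_wvar] at hv1
  simp only [Equiv.Perm.one_apply] at hv1
  erw [sum_ite_point _ j (c j = c (σ j)) ?_] at hv1
  · by_contra hne
    rw [if_neg (fun hcc => hne (hc hcc).symm)] at hv1
    exact absurd hv1 (by norm_num)
  · intro j'
    constructor
    · rintro ⟨h1, h2⟩
      obtain rfl := Fin.castLE_injective hrm h2
      exact ⟨rfl, h1⟩
    · rintro ⟨rfl, hq⟩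
      exact ⟨hq, rfl⟩

lemma prod_monomial_one {ι : Type*} (s : Finset ι) (f : ι → (MyVar m n →₀ ℕ)) :
    (∏ j ∈ s, (monomial (f j) (1 : K))) = monomial (∑ j ∈ s, f j) 1 := by
  classical
  induction s using Finset.cons_induction with
  | empty => simp
  | cons a s ha ih =>
      rw [Finset.prod_cons, Finset.sum_cons, ih, monomial_mul, one_mul]

lemma prod_ite_all {ι : Type*} [Fintype ι] (p : ι → Prop) [DecidablePred p]
    (f : ι → MvPolynomial (MyVar m n) K) :
    (∏ i, if p i then f i else 0) = if (∀ i, p i) then ∏ i, f i else 0 := by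
  by_cases h : ∀ i, p i
  · rw [if_pos h]
    exact Finset.prod_congr rfl fun i _ => if_pos (h i)
  · rw [if_neg h]
    push_neg at h
    obtain ⟨i, hi⟩ := h
    exact Finset.prod_eq_zero (Finset.mem_univ i) (if_neg hi)

/-- A single term of the fully expanded minor. -/
noncomputable def detTerm (b : Fin m → Fin n) (c : Fin r → Fin m) (d : Fin r → Fin n)
    (σ : Equiv.Perm (Fin r)) (k : Fin r → Fin m) : MvPolynomial (MyVar m n) K :=
  if (∀ j, b (k j) ≤ d j) then
    (monomial (mexp c d σ k)) (((Equiv.Perm.sign σ : ℤ)) : K) else 0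

lemma det_expand (b : Fin m → Fin n) (c : Fin r → Fin m) (d : Fin r → Fin n) :
    (Matrix.of fun i j : Fin r => Zmat K m n b (c i) (d j)).det
      = ∑ σ : Equiv.Perm (Fin r), ∑ k : Fin r → Fin m, detTerm b c d σ k := by
  classical
  rw [Matrix.det_apply']
  refine Finset.sum_congr rfl fun σ _ => ?_
  have hz : ∀ (i : Fin m) (j : Fin r), Zmat K m n b i (d j)
      = ∑ x : Fin m, (if b x ≤ d j then X (wvar i x) * X (uvar x (d j)) else 0) := by
    intro i j
    show (Wmat K m n * Umat K m n b) i (d j) = _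
    rw [Matrix.mul_apply]
    refine Finset.sum_congr rfl fun x _ => ?_
    show X (wvar i x) * (if b x ≤ d j then X (uvar x (d j)) else 0) = _
    rw [mul_ite, mul_zero]
  have hX : ∀ (w : Fin m × Fin m) (u : Fin m × Fin n),
      X (wvar w.1 w.2) * X (uvar u.1 u.2)
        = (monomial (Finsupp.single (wvar (m := m) (n := n) w.1 w.2) 1
            + Finsupp.single (uvar u.1 u.2) 1)) (1 : K) := by
    intro w u
    have e1 : (X (wvar (m := m) (n := n) w.1 w.2) : MvPolynomial (MyVar m n) K)
        = monomial (Finsupp.single (wvar w.1 w.2) 1) 1 := by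
      rw [← X_pow_eq_monomial, pow_one]
    have e2 : (X (uvar (m := m) (n := n) u.1 u.2) : MvPolynomial (MyVar m n) K)
        = monomial (Finsupp.single (uvar u.1 u.2) 1) 1 := by
      rw [← X_pow_eq_monomial, pow_one]
    rw [e1, e2, monomial_mul, one_mul]
  have hprod : (∏ i, (Matrix.of fun i j : Fin r => Zmat K m n b (c i) (d j)) (σ i) i)
      = ∑ k : Fin r → Fin m, (if (∀ j, b (k j) ≤ d j) then
          (monomial (mexp c d σ k)) (1 : K) else 0) := by
    calc (∏ i, (Matrix.of fun i j : Fin r => Zmat K m n b (c i) (d j)) (σ i) i)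
        = ∏ i, ∑ x : Fin m,
            (if b x ≤ d i then X (wvar (c (σ i)) x) * X (uvar x (d i)) else 0) := by
          refine Finset.prod_congr rfl fun i _ => ?_
          rw [Matrix.of_apply, hz]
      _ = ∑ k ∈ Fintype.piFinset (fun _ : Fin r => (Finset.univ : Finset (Fin m))),
            ∏ i, (if b (k i) ≤ d i then X (wvar (c (σ i)) (k i)) * X (uvar (k i) (d i)) else 0) :=
          Finset.prod_univ_sum _ _
      _ = ∑ k : Fin r → Fin m,
            ∏ i, (if b (k i) ≤ d i then X (wvar (c (σ i)) (k i)) * X (uvar (k i) (d i)) else 0) := by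
          rw [Fintype.piFinset_univ]
      _ = ∑ k : Fin r → Fin m, (if (∀ j, b (k j) ≤ d j) then
            (monomial (mexp c d σ k)) (1 : K) else 0) := by
          refine Finset.sum_congr rfl fun k _ => ?_
          rw [prod_ite_all]
          by_cases hcond : ∀ i, b (k i) ≤ d i
          · rw [if_pos hcond, if_pos hcond,
              Finset.prod_congr rfl fun i _ => hX (c (σ i), k i) (k i, d i), prod_monomial_one]
            rfl
          · rw [if_neg hcond, if_neg hcond]
  rw [hprod, Finset.mul_sum]
  refine Finset.sum_congr rfl fun k _ => ?_
  rw [detTerm]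
  by_cases hcond : ∀ j, b (k j) ≤ d j
  · rw [if_pos hcond, if_pos hcond,
      ← map_intCast (C : K →+* MvPolynomial (MyVar m n) K), C_mul_monomial, mul_one]
  · rw [if_neg hcond, if_neg hcond, mul_zero]

lemma coeff_detTerm (b : Fin m → Fin n) (c : Fin r → Fin m) (d : Fin r → Fin n)
    (σ : Equiv.Perm (Fin r)) (k : Fin r → Fin m) (μ : MyVar m n →₀ ℕ) :
    coeff μ (detTerm b c d σ k)
      = if ((∀ j, b (k j) ≤ d j) ∧ mexp c d σ k = μ) then ((Equiv.Perm.sign σ : ℤ) : K) else 0 := by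
  classical
  rw [detTerm]
  by_cases h1 : ∀ j, b (k j) ≤ d j
  · rw [if_pos h1, coeff_monomial]
    by_cases h2 : mexp c d σ k = μ
    · rw [if_pos h2, if_pos ⟨h1, h2⟩]
    · rw [if_neg h2, if_neg (fun hh => h2 hh.2)]
  · rw [if_neg h1, if_neg (fun hh => h1 hh.1), coeff_zero]

lemma coeff_det (b : Fin m → Fin n) (c : Fin r → Fin m) (d : Fin r → Fin n)
    (μ : MyVar m n →₀ ℕ) :
    coeff μ ((Matrix.of fun i j : Fin r => Zmat K m n b (c i) (d j)).det)
      = ∑ σ : Equiv.Perm (Fin r), ∑ k : Fin r → Fin m,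
          (if ((∀ j, b (k j) ≤ d j) ∧ mexp c d σ k = μ)
            then ((Equiv.Perm.sign σ : ℤ) : K) else 0) := by
  classical
  rw [det_expand, coeff_sum]
  refine Finset.sum_congr rfl fun σ _ => ?_
  rw [coeff_sum]
  exact Finset.sum_congr rfl fun k _ => coeff_detTerm b c d σ k μ

lemma mexp_mul_swap (c : Fin r → Fin m) (d : Fin r → Fin n)
    {k : Fin r → Fin m} {j1 j2 : Fin r} (hk : k j1 = k j2) (σ : Equiv.Perm (Fin r)) :
    mexp c d (σ * Equiv.swap j1 j2) k = mexp c d σ k := by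
  have hks : ∀ j, k (Equiv.swap j1 j2 j) = k j := by
    intro j
    rcases eq_or_ne j j1 with rfl | h1
    · rw [Equiv.swap_apply_left]; exact hk.symm
    rcases eq_or_ne j j2 with rfl | h2
    · rw [Equiv.swap_apply_right]; exact hk
    · rw [Equiv.swap_apply_of_ne_of_ne h1 h2]
  unfold mexp
  rw [Finset.sum_add_distrib, Finset.sum_add_distrib]
  congr 1
  calc (∑ j : Fin r, Finsupp.single (wvar (c ((σ * Equiv.swap j1 j2) j)) (k j)) 1)
      = ∑ j : Fin r, (fun j' => Finsupp.single (wvar (m := m) (n := n) (c (σ j')) (k j')) 1)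
          (Equiv.swap j1 j2 j) := by
        refine Finset.sum_congr rfl fun j _ => ?_
        simp only [Equiv.Perm.mul_apply, hks]
    _ = ∑ j : Fin r, Finsupp.single (wvar (c (σ j)) (k j)) 1 :=
        Equiv.sum_comp (Equiv.swap j1 j2)
          (fun j' => Finsupp.single (wvar (m := m) (n := n) (c (σ j')) (k j')) 1)

lemma coeff_zero_noninj (b : Fin m → Fin n) (c : Fin r → Fin m) {d : Fin r → Fin n}
    (hd : Function.Injective d) {μ : MyVar m n →₀ ℕ}
    {σ0 : Equiv.Perm (Fin r)} {k0 : Fin r → Fin m}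
    (h0 : mexp c d σ0 k0 = μ) (hk0 : ¬ Function.Injective k0) :
    (∑ σ : Equiv.Perm (Fin r), ∑ k : Fin r → Fin m,
      (if ((∀ j, b (k j) ≤ d j) ∧ mexp c d σ k = μ)
        then ((Equiv.Perm.sign σ : ℤ) : K) else 0)) = 0 := by
  classical
  obtain ⟨j1, j2, hk12, hne⟩ := Function.not_injective_iff.mp hk0
  set F : Equiv.Perm (Fin r) × (Fin r → Fin m) → K := fun p =>
    if ((∀ j, b (p.2 j) ≤ d j) ∧ mexp c d p.1 p.2 = μ)
      then ((Equiv.Perm.sign p.1 : ℤ) : K) else 0 with hF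
  have hstep : (∑ σ : Equiv.Perm (Fin r), ∑ k : Fin r → Fin m,
      (if ((∀ j, b (k j) ≤ d j) ∧ mexp c d σ k = μ)
        then ((Equiv.Perm.sign σ : ℤ) : K) else 0))
      = ∑ p : Equiv.Perm (Fin r) × (Fin r → Fin m), F p := (Fintype.sum_prod_type F).symm
  rw [hstep]
  set g : (Equiv.Perm (Fin r) × (Fin r → Fin m)) → (Equiv.Perm (Fin r) × (Fin r → Fin m)) :=
    fun p => if ((∀ j, b (p.2 j) ≤ d j) ∧ mexp c d p.1 p.2 = μ)
      then (p.1 * Equiv.swap j1 j2, p.2) else p with hg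
  have hkey : ∀ p : Equiv.Perm (Fin r) × (Fin r → Fin m),
      ((∀ j, b (p.2 j) ≤ d j) ∧ mexp c d p.1 p.2 = μ) → p.2 j1 = p.2 j2 := by
    intro p hp
    have : p.2 = k0 := mexp_k_eq hd (hp.2.trans h0.symm)
    rw [this]; exact hk12
  have hcond_swap : ∀ p : Equiv.Perm (Fin r) × (Fin r → Fin m),
      (hp : (∀ j, b (p.2 j) ≤ d j) ∧ mexp c d p.1 p.2 = μ) →
      ((∀ j, b (p.2 j) ≤ d j) ∧ mexp c d (p.1 * Equiv.swap j1 j2) p.2 = μ) := by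
    intro p hp
    exact ⟨hp.1, (mexp_mul_swap c d (hkey p hp) p.1).trans hp.2⟩
  refine Finset.sum_ninvolution g ?_ ?_ (fun p => Finset.mem_univ _) ?_
  · intro p
    by_cases hp : (∀ j, b (p.2 j) ≤ d j) ∧ mexp c d p.1 p.2 = μ
    · have hgp : g p = (p.1 * Equiv.swap j1 j2, p.2) := if_pos hp
      rw [hF]
      simp only [hgp, if_pos hp, if_pos (hcond_swap p hp)]
      rw [Equiv.Perm.sign_mul, Equiv.Perm.sign_swap hne]
      push_cast
      ring
    · have hgp : g p = p := if_neg hp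
      rw [hF]
      simp only [hgp, if_neg hp]
      exact add_zero 0
  · intro p hFp
    have hp : (∀ j, b (p.2 j) ≤ d j) ∧ mexp c d p.1 p.2 = μ := by
      by_contra hcon
      exact hFp (if_neg hcon)
    rw [hg]
    simp only [if_pos hp]
    intro hcontra
    have h1 : p.1 * Equiv.swap j1 j2 = p.1 := congrArg Prod.fst hcontra
    have h2 : Equiv.swap j1 j2 = 1 :=
      mul_left_cancel (a := p.1) (h1.trans (mul_one p.1).symm)
    exact hne (by rw [← Equiv.swap_apply_left j1 j2, h2, Equiv.Perm.one_apply])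
  · intro p
    by_cases hp : (∀ j, b (p.2 j) ≤ d j) ∧ mexp c d p.1 p.2 = μ
    · have hgp : g p = (p.1 * Equiv.swap j1 j2, p.2) := if_pos hp
      have hp2 := hcond_swap p hp
      have hgp2 : g (p.1 * Equiv.swap j1 j2, p.2) = ((p.1 * Equiv.swap j1 j2) * Equiv.swap j1 j2, p.2) :=
        if_pos hp2
      rw [hgp, hgp2, mul_assoc, Equiv.swap_mul_self, mul_one]
    · have hgp : g p = p := if_neg hp
      rw [hgp, hgp]

lemma myvar_cases (v : MyVar m n) :
    (∃ i a : Fin m, v = wvar (n := n) i a) ∨ (∃ (i : Fin m) (e : Fin n), v = uvar i e) :=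
  match v with
  | Sum.inl (i, a) => Or.inl ⟨i, a, rfl⟩
  | Sum.inr (i, e) => Or.inr ⟨i, e, rfl⟩

lemma varRank_wvar (i a : Fin m) : varRank m n (wvar i a) = (i : ℕ) + (a : ℕ) * m := rfl

lemma varRank_uvar (i : Fin m) (e : Fin n) :
    varRank m n (uvar i e) = m * m + ((e : ℕ) + (i : ℕ) * n) := rfl

lemma rank_cases {M i a ct t : ℕ} (him : i < M) (hcm : ct < M)
    (h : i + a * M < ct + t * M) : a < t ∨ (a = t ∧ i < ct) := by
  rcases lt_trichotomy a t with h' | h' | h'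
  · exact Or.inl h'
  · subst h'
    exact Or.inr ⟨rfl, lt_of_add_lt_add_right h⟩
  · exfalso
    have hcontra : ct + t * M < ct + t * M :=
      calc ct + t * M < M + t * M := Nat.add_lt_add_right hcm _
        _ = (t + 1) * M := by ring
        _ ≤ a * M := Nat.mul_le_mul_right M h'
        _ ≤ i + a * M := Nat.le_add_left _ _
        _ < ct + t * M := h
    exact lt_irrefl _ hcontra

lemma wvar_rank_lt_sq (hrm : r ≤ m) (i : Fin m) (t : Fin r) :
    (i : ℕ) + (t : ℕ) * m < m * m := by
  have h1 : (i : ℕ) + (t : ℕ) * m < m + (t : ℕ) * m := Nat.add_lt_add_right i.isLt _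
  have h2 : m + (t : ℕ) * m = ((t : ℕ) + 1) * m := by ring
  have h3 : ((t : ℕ) + 1) * m ≤ m * m :=
    Nat.mul_le_mul_right m (le_trans t.isLt hrm)
  omega

lemma mexp_degree (c : Fin r → Fin m) (d : Fin r → Fin n)
    (σ : Equiv.Perm (Fin r)) (k : Fin r → Fin m) :
    ((mexp c d σ k).sum fun _ e => e) = 2 * r := by
  classical
  rw [mexp, ← Finsupp.sum_finset_sum_index (fun _ => rfl) (fun _ _ _ => rfl)]
  rw [Finset.sum_congr rfl (fun j (_ : j ∈ Finset.univ) =>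
    (by rw [Finsupp.sum_add_index' (fun _ => rfl) (fun _ _ _ => rfl),
          Finsupp.sum_single_index rfl, Finsupp.sum_single_index rfl] :
      ((Finsupp.single (wvar (c (σ j)) (k j)) 1
        + Finsupp.single (uvar (k j) (d j)) 1).sum fun _ e => e) = 2))]
  simp [Finset.sum_const, mul_comm]

lemma lex_lt_target {c : Fin r → Fin m} {d : Fin r → Fin n}
    (hc : StrictMono c) (hd : StrictMono d) (hrm : r ≤ m)
    {σ : Equiv.Perm (Fin r)} {k : Fin r → Fin m} (hk : Function.Injective k)
    (hne : mexp c d σ k ≠ mexp c d 1 (fun j => Fin.castLE hrm j)) :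
    toLex (mexp c d σ k) < toLex (mexp c d 1 (fun j => Fin.castLE hrm j)) := by
  classical
  rw [Finsupp.Lex.lt_iff]
  simp only [ofLex_toLex]
  by_cases hκ : ∀ a : Fin r, k (σ⁻¹ a) = Fin.castLE hrm a
  · -- the `W`-parts agree; first difference is among the `U` variables
    have hkj : ∀ j, k j = Fin.castLE hrm (σ j) := by
      intro j
      have := hκ (σ j)
      rwa [Equiv.Perm.inv_def, Equiv.symm_apply_apply] at this
    by_cases hσ : ∀ j, σ j = j
    · exact absurd (by
        rw [mexp, mexp]
        refine Finset.sum_congr rfl fun j _ => ?_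
        rw [hkj j, hσ j, Equiv.Perm.one_apply]) hne
    · push_neg at hσ
      obtain ⟨j0, hj0⟩ := hσ
      set S : Finset (Fin r) := Finset.univ.filter (fun j => σ j ≠ j) with hS
      have hSne : S.Nonempty := ⟨j0, by simp [hS, hj0]⟩
      set s := S.min' hSne with hs_def
      have hs : σ s ≠ s := by
        have := S.min'_mem hSne
        simp only [hS, Finset.mem_filter] at this
        exact this.2
      have hfix : ∀ j, j < s → σ j = j := by
        intro j hj
        by_contra hcon
        exact absurd (S.min'_le j (by simp [hS, hcon])) (not_le.mpr hj)
      have hlow : ∀ j, σ j < s → σ j = j := fun j hj => σ.injective (hfix (σ j) hj)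
      refine ⟨uvar (Fin.castLE hrm s) (d s), ?_, ?_⟩
      · intro w hw
        rcases myvar_cases w with ⟨i, a, rfl⟩ | ⟨i, e, rfl⟩
        · rw [mexp_apply_wvar, mexp_apply_wvar]
          simp only [Equiv.Perm.one_apply]
          calc (∑ j, if c (σ j) = i ∧ k j = a then (1 : ℕ) else 0)
              = ∑ j, (fun x => if c x = i ∧ Fin.castLE hrm x = a then (1 : ℕ) else 0) (σ j) := by
                refine Finset.sum_congr rfl fun j _ => if_congr ?_ rfl rfl
                rw [hkj j]
            _ = ∑ j, if c j = i ∧ Fin.castLE hrm j = a then (1 : ℕ) else 0 :=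
                Equiv.sum_comp σ (fun x => if c x = i ∧ Fin.castLE hrm x = a then (1 : ℕ) else 0)
        · have hw' : (e : ℕ) + (i : ℕ) * n < ((d s : ℕ)) + (s : ℕ) * n := by
            have h0 := myvar_lt_iff.mp hw
            rw [varRank_uvar, varRank_uvar] at h0
            have h2 : ((Fin.castLE hrm s : Fin m) : ℕ) = (s : ℕ) := Fin.coe_castLE hrm s
            rw [h2] at h0
            omega
          have hcases := rank_cases e.isLt (d s).isLt hw'
          rw [mexp_apply_uvar, mexp_apply_uvar]
          rcases hcases with hi | ⟨hi, he⟩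
          · have hir : (i : ℕ) < r := lt_trans hi s.isLt
            set i' : Fin r := ⟨(i : ℕ), hir⟩ with hi'def
            have hii : Fin.castLE hrm i' = i := Fin.ext (by simp [hi'def])
            have hlt : i' < s := by rw [Fin.lt_def]; exact hi
            have hiffL : ∀ j, (k j = i ∧ d j = e) ↔ (j = i' ∧ d i' = e) := by
              intro j
              constructor
              · rintro ⟨h1, h2⟩
                have hσj : ((σ j : Fin r) : ℕ) = (i : ℕ) := by
                  have := congrArg Fin.val ((hkj j).symm.trans h1)
                  simpa using this
                have hσjs : σ j < s := by rw [Fin.lt_def, hσj]; exact hi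
                have hjj : σ j = j := hlow j hσjs
                have hji : j = i' := Fin.ext (by rw [← hσj, hjj])
                subst hji
                exact ⟨rfl, h2⟩
              · rintro ⟨rfl, h2⟩
                refine ⟨?_, h2⟩
                rw [hkj i', hfix i' hlt, hii]
            have hiffR : ∀ j, ((Fin.castLE hrm j = i) ∧ d j = e) ↔ (j = i' ∧ d i' = e) := by
              intro j
              constructor
              · rintro ⟨h1, h2⟩
                have hji : j = i' := Fin.ext (by
                  have := congrArg Fin.val h1
                  simpa using this)
                subst hji
                exact ⟨rfl, h2⟩
              · rintro ⟨rfl, h2⟩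
                exact ⟨hii, h2⟩
            rw [sum_ite_point _ i' (d i' = e) hiffL, sum_ite_point _ i' (d i' = e) hiffR]
          · have hL : ∀ j, ¬ (k j = i ∧ d j = e) := by
              rintro j ⟨h1, h2⟩
              have hσj : ((σ j : Fin r) : ℕ) = (s : ℕ) := by
                have := congrArg Fin.val ((hkj j).symm.trans h1)
                simpa [hi] using this
              have hσjs : σ j = s := Fin.ext hσj
              rcases lt_trichotomy j s with hj | hj | hj
              · have := hfix j hj
                rw [this] at hσjs
                exact absurd hσjs (ne_of_lt hj)
              · subst hj
                exact hs hσjs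
              · have hde : d s < d j := hd hj
                rw [h2] at hde
                have : (e : ℕ) < (d s : ℕ) := he
                have : ((d s) : ℕ) < (e : ℕ) := hde
                omega
            have hR : ∀ j, ¬ ((Fin.castLE hrm j = i) ∧ d j = e) := by
              rintro j ⟨h1, h2⟩
              have hji : (j : ℕ) = (s : ℕ) := by
                have := congrArg Fin.val h1
                simpa [hi] using this
              have : j = s := Fin.ext hji
              subst this
              rw [h2] at he
              exact lt_irrefl _ he
            rw [sum_ite_zero' _ hL, sum_ite_zero' _ hR]
      · rw [mexp_apply_uvar, mexp_apply_uvar]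
        have hL : ∀ j, ¬ (k j = Fin.castLE hrm s ∧ d j = d s) := by
          rintro j ⟨h1, h2⟩
          have hjs : j = s := hd.injective h2
          subst hjs
          have hval : ((σ s : Fin r) : ℕ) = (s : ℕ) := by
            have := congrArg Fin.val ((hkj s).symm.trans h1)
            simpa using this
          exact hs (Fin.ext hval)
        have hR : ∀ j, ((Fin.castLE hrm j = Fin.castLE hrm s) ∧ d j = d s) ↔ (j = s ∧ True) := by
          intro j
          constructor
          · rintro ⟨h1, h2⟩
            exact ⟨hd.injective h2, trivial⟩
          · rintro ⟨rfl, -⟩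
            exact ⟨rfl, rfl⟩
        rw [sum_ite_zero' _ hL, sum_ite_point _ s True hR]
        simp
  · -- the `W`-parts differ
    push_neg at hκ
    obtain ⟨a0, ha0⟩ := hκ
    set S : Finset (Fin r) := Finset.univ.filter (fun a => k (σ⁻¹ a) ≠ Fin.castLE hrm a) with hS
    have hSne : S.Nonempty := ⟨a0, by simp [hS, ha0, -Equiv.Perm.coe_inv]⟩
    set t := S.min' hSne with ht_def
    have ht : k (σ⁻¹ t) ≠ Fin.castLE hrm t := by
      have := S.min'_mem hSne
      simp only [hS, Finset.mem_filter] at this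
      exact this.2
    have hfix : ∀ a, a < t → k (σ⁻¹ a) = Fin.castLE hrm a := by
      intro a haj
      by_contra hcon
      exact absurd (S.min'_le a (by simp [hS, hcon, -Equiv.Perm.coe_inv])) (not_le.mpr haj)
    refine ⟨wvar (c t) (Fin.castLE hrm t), ?_, ?_⟩
    · intro w hw
      rcases myvar_cases w with ⟨i, a, rfl⟩ | ⟨i, e, rfl⟩
      · have hw' : (i : ℕ) + (a : ℕ) * m < ((c t) : ℕ) + (t : ℕ) * m := by
          have h0 := myvar_lt_iff.mp hw
          rw [varRank_wvar, varRank_wvar] at h0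
          have h2 : ((Fin.castLE hrm t : Fin m) : ℕ) = (t : ℕ) := Fin.coe_castLE hrm t
          rw [h2] at h0
          exact h0
        have hcases := rank_cases i.isLt (c t).isLt hw'
        rw [mexp_apply_wvar, mexp_apply_wvar]
        simp only [Equiv.Perm.one_apply]
        rcases hcases with hat | ⟨hat, hic⟩
        · have har : (a : ℕ) < r := lt_trans hat t.isLt
          set a' : Fin r := ⟨(a : ℕ), har⟩ with ha'def
          have haa : Fin.castLE hrm a' = a := Fin.ext (by simp [ha'def])
          have ha't : a' < t := Fin.lt_def.mpr hat
          have hka : k (σ⁻¹ a') = a := by rw [hfix a' ha't, haa]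
          have hiffL : ∀ j, (c (σ j) = i ∧ k j = a) ↔ (j = σ⁻¹ a' ∧ c a' = i) := by
            intro j
            constructor
            · rintro ⟨h1, h2⟩
              have hj : j = σ⁻¹ a' := hk (h2.trans hka.symm)
              subst hj
              rw [Equiv.Perm.inv_def, Equiv.apply_symm_apply] at h1
              exact ⟨rfl, h1⟩
            · rintro ⟨rfl, h2⟩
              refine ⟨?_, hka⟩
              rw [Equiv.Perm.inv_def, Equiv.apply_symm_apply]
              exact h2
          have hiffR : ∀ j, (c j = i ∧ Fin.castLE hrm j = a) ↔ (j = a' ∧ c a' = i) := by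
            intro j
            constructor
            · rintro ⟨h1, h2⟩
              have hja : j = a' := Fin.ext (by
                have := congrArg Fin.val h2
                simpa using this)
              subst hja
              exact ⟨rfl, h1⟩
            · rintro ⟨rfl, h2⟩
              exact ⟨h2, haa⟩
          erw [sum_ite_point _ (σ⁻¹ a') (c a' = i) hiffL, sum_ite_point _ a' (c a' = i) hiffR]
        · have hat' : a = Fin.castLE hrm t := Fin.ext (by simp [hat])
          have hL : ∀ j, ¬ (c (σ j) = i ∧ k j = a) := by
            rintro j ⟨h1, h2⟩
            rcases lt_trichotomy (σ j) t with hj | hj | hj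
            · have hkfix : k j = Fin.castLE hrm (σ j) := by
                have := hfix (σ j) hj
                rwa [Equiv.Perm.inv_def, Equiv.symm_apply_apply] at this
              have : ((σ j : Fin r) : ℕ) = (t : ℕ) := by
                have := congrArg Fin.val (hkfix.symm.trans (h2.trans hat'))
                simpa using this
              rw [Fin.lt_def, this] at hj
              exact lt_irrefl _ hj
            · have hj' : j = σ⁻¹ t := by
                have := congrArg (σ⁻¹ : Equiv.Perm (Fin r)) hj
                rwa [Equiv.Perm.inv_def, Equiv.symm_apply_apply] at this
              subst hj'
              rw [hat'] at h2
              exact ht h2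
            · have : c t < c (σ j) := hc hj
              rw [h1] at this
              have h3 : (i : ℕ) < ((c t) : ℕ) := hic
              have h4 : ((c t) : ℕ) < (i : ℕ) := this
              omega
          have hR : ∀ j, ¬ (c j = i ∧ Fin.castLE hrm j = a) := by
            rintro j ⟨h1, h2⟩
            have hjt : j = t := Fin.ext (by
              have := congrArg Fin.val (h2.trans (hat'.symm ▸ rfl : a = Fin.castLE hrm t))
              simpa using this)
            subst hjt
            rw [h1] at hic
            exact lt_irrefl _ hic
          erw [sum_ite_zero' _ hL, sum_ite_zero' _ hR]
      · exfalso
        have h0 := myvar_lt_iff.mp hw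
        rw [varRank_uvar, varRank_wvar] at h0
        have h2 : ((Fin.castLE hrm t : Fin m) : ℕ) = (t : ℕ) := Fin.coe_castLE hrm t
        rw [h2] at h0
        have h3 : ((c t) : ℕ) + (t : ℕ) * m < m * m := wvar_rank_lt_sq hrm (c t) t
        omega
    · rw [mexp_apply_wvar, mexp_apply_wvar]
      simp only [Equiv.Perm.one_apply]
      have hL : ∀ j, ¬ (c (σ j) = c t ∧ k j = Fin.castLE hrm t) := by
        rintro j ⟨h1, h2⟩
        have hσj : σ j = t := hc.injective h1
        have hj' : j = σ⁻¹ t := by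
          have := congrArg (σ⁻¹ : Equiv.Perm (Fin r)) hσj
          rwa [Equiv.Perm.inv_def, Equiv.symm_apply_apply] at this
        subst hj'
        exact ht h2
      have hR : ∀ j, (c j = c t ∧ Fin.castLE hrm j = Fin.castLE hrm t) ↔ (j = t ∧ True) := by
        intro j
        constructor
        · rintro ⟨h1, h2⟩
          exact ⟨hc.injective h1, trivial⟩
        · rintro ⟨rfl, -⟩
          exact ⟨rfl, rfl⟩
      erw [sum_ite_zero' _ hL, sum_ite_point _ t True hR]
      simp

end DetLM

/-- For `[c₁,…,c_r | d₁,…,d_r] ∈ Δ(m×n;γ*)` (i.e. `d_j ≥ b_j` for all `j`), the leading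
monomial of the minor `[c₁,…,c_r | d₁,…,d_r]_{Z_γ}` for the degree lexicographic order is
`∏_{j=1}^r W_{c_j,j} U_{j,d_j}`. -/
theorem stmt_7 (K : Type) [Field K] (m n : ℕ) (hm : 0 < m) (hmn : m ≤ n)
    (b : Fin m → Fin n) (hb : StrictMono b)
    (r : ℕ) (hr : 1 ≤ r) (hrm : r ≤ m) (c : Fin r → Fin m) (d : Fin r → Fin n)
    (hc : StrictMono c) (hd : StrictMono d)
    (hbd : ∀ j : Fin r, b (Fin.castLE hrm j) ≤ d j) :
    IsLeadingMonomial
      ((Matrix.of fun i j : Fin r => Zmat K m n b (c i) (d j)).det)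
      (∑ j : Fin r, (Finsupp.single (wvar (c j) (Fin.castLE hrm j)) 1 +
        Finsupp.single (uvar (Fin.castLE hrm j) (d j)) 1)) := by
  classical
  have hT : (∑ j : Fin r, (Finsupp.single (wvar (c j) (Fin.castLE hrm j)) 1 +
      Finsupp.single (uvar (Fin.castLE hrm j) (d j)) 1))
      = mexp c d 1 (fun j => Fin.castLE hrm j) := by
    rw [mexp]
    refine Finset.sum_congr rfl fun j _ => ?_
    rw [Equiv.Perm.one_apply]
  rw [hT]
  have hcoeffT : MvPolynomial.coeff (mexp c d 1 (fun j => Fin.castLE hrm j))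
      ((Matrix.of fun i j : Fin r => Zmat K m n b (c i) (d j)).det) = 1 := by
    rw [coeff_det]
    rw [Finset.sum_eq_single (1 : Equiv.Perm (Fin r))]
    · rw [Finset.sum_eq_single (fun j => Fin.castLE hrm j)]
      · rw [if_pos ⟨hbd, rfl⟩]
        simp
      · intro k _ hkne
        refine if_neg ?_
        rintro ⟨h1, h2⟩
        exact hkne (mexp_k_eq hd.injective h2)
      · intro habs; exact absurd (Finset.mem_univ _) habs
    · intro σ _ hσne
      refine Finset.sum_eq_zero fun k _ => if_neg ?_
      rintro ⟨h1, h2⟩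
      exact hσne (mexp_eq_target hrm hc.injective hd.injective h2).1
    · intro habs; exact absurd (Finset.mem_univ _) habs
  constructor
  · rw [MvPolynomial.mem_support_iff, hcoeffT]
    exact one_ne_zero
  · intro μ hμ hμne
    have hcμ : MvPolynomial.coeff μ
        ((Matrix.of fun i j : Fin r => Zmat K m n b (c i) (d j)).det) ≠ 0 :=
      MvPolynomial.mem_support_iff.mp hμ
    rw [coeff_det] at hcμ
    obtain ⟨σ, -, hσ⟩ := Finset.exists_ne_zero_of_sum_ne_zero hcμ
    obtain ⟨k, -, hk0⟩ := Finset.exists_ne_zero_of_sum_ne_zero hσ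
    have hcond : (∀ j, b (k j) ≤ d j) ∧ mexp c d σ k = μ := by
      by_contra hcon; exact hk0 (if_neg hcon)
    by_cases hkinj : Function.Injective k
    · refine Or.inr ⟨?_, ?_⟩
      · rw [← hcond.2, mexp_degree, mexp_degree]
      · rw [← hcond.2]
        exact lex_lt_target hc hd hrm hkinj (by rw [hcond.2]; exact hμne)
    · exfalso
      rw [coeff_zero_noninj b c hd.injective hcond.2 hkinj] at hcμ
      exact hcμ rfl
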